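/- Let K be a totally real number field, p ≥ 5 a rational prime, d ∈ O_K \ {0} 5-th power free, and let (a, b, c) ∈ O_K³ be a nontrivial primitive solution of a⁵ + b⁵ = d·c^p. Set Δ = 2⁴·5³·(a + b)²·(a⁵ + b⁵)² and c₄ = 2⁴·5·(5·(a² + b²)² − 3·φ₅(a, b)). Then for every prime ideal q of O_K with q ∤ 10·d: p divides v_q(Δ), and if v_q(Δ) > 0 then v_q(c₄) = 0. -/

import Mathlib

open IsDedekindDomain NumberField

-- The additive `P`-adic valuation on a number field `F`, normalized so that a uniformizer
-- has valuation `1`; by convention `vP P 0 = 0`.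
open scoped Classical in
noncomputable def vP {F : Type*} [Field F] [NumberField F]
    (P : HeightOneSpectrum (𝓞 F)) (x : F) : ℤ :=
  if hx : x = 0 then 0
  else - Multiplicative.toAdd (WithZero.unzero ((Valuation.ne_zero_iff (P.valuation F)).mpr hx))

-- A number field is totally real if all its infinite places are real.
def TotallyReal (F : Type*) [Field F] [NumberField F] : Prop :=
  ∀ v : NumberField.InfinitePlace F, v.IsReal

section Helpers

variable {F : Type*} [Field F] [NumberField F] (q : HeightOneSpectrum (𝓞 F))

lemma vP_mul {x y : F} (hx : x ≠ 0) (hy : y ≠ 0) :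
    vP q (x * y) = vP q x + vP q y := by
  rw [vP, vP, vP, dif_neg (mul_ne_zero hx hy), dif_neg hx, dif_neg hy]
  have h : WithZero.unzero ((Valuation.ne_zero_iff (q.valuation F)).mpr (mul_ne_zero hx hy))
      = WithZero.unzero ((Valuation.ne_zero_iff (q.valuation F)).mpr hx)
      * WithZero.unzero ((Valuation.ne_zero_iff (q.valuation F)).mpr hy) := by
    apply WithZero.coe_inj.mp
    simp [WithZero.coe_unzero, map_mul]
  rw [h, toAdd_mul]
  ring

lemma vP_one : vP q (1 : F) = 0 := by
  have h := vP_mul q (one_ne_zero (α := F)) (one_ne_zero (α := F))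
  rw [mul_one] at h; omega

lemma vP_pow {x : F} (hx : x ≠ 0) (n : ℕ) : vP q (x ^ n) = n * vP q x := by
  induction n with
  | zero => simp [pow_zero, vP_one]
  | succ n ih =>
    rw [pow_succ, vP_mul q (pow_ne_zero n hx) hx, ih]
    push_cast; ring

lemma vP_nonneg {r : 𝓞 F} (hr : r ≠ 0) : 0 ≤ vP q (r : F) := by
  have hrK : (r : F) ≠ 0 := by exact_mod_cast hr
  rw [vP, dif_neg hrK]
  have h1 : (q.valuation F) ((r : F)) ≤ 1 := by
    rw [RingOfIntegers.coe_eq_algebraMap]; exact q.valuation_le_one (K := F) r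
  rw [← WithZero.coe_unzero ((Valuation.ne_zero_iff (q.valuation F)).mpr hrK)] at h1
  rw [show (1 : WithZero (Multiplicative ℤ)) = ((1 : Multiplicative ℤ) : WithZero (Multiplicative ℤ)) from rfl, WithZero.coe_le_coe] at h1
  have := Multiplicative.toAdd_le.mpr h1
  simpa using this

lemma vP_pos_iff {r : 𝓞 F} (hr : r ≠ 0) : 0 < vP q (r : F) ↔ r ∈ q.asIdeal := by
  have hrK : (r : F) ≠ 0 := by exact_mod_cast hr
  rw [vP, dif_neg hrK]
  have hmem : (q.valuation F) ((r : F)) < 1 ↔ r ∈ q.asIdeal := by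
    rw [RingOfIntegers.coe_eq_algebraMap, q.valuation_lt_one_iff_dvd (K := F), Ideal.dvd_span_singleton]
  rw [← hmem]
  conv_rhs => rw [← WithZero.coe_unzero ((Valuation.ne_zero_iff (q.valuation F)).mpr hrK)]
  rw [show (1 : WithZero (Multiplicative ℤ)) = ((1 : Multiplicative ℤ) : WithZero (Multiplicative ℤ)) from rfl, WithZero.coe_lt_coe]
  have h2 : WithZero.unzero ((Valuation.ne_zero_iff (q.valuation F)).mpr hrK) < (1 : Multiplicative ℤ)
      ↔ Multiplicative.toAdd (WithZero.unzero ((Valuation.ne_zero_iff (q.valuation F)).mpr hrK)) < 0 := by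
    rw [← toAdd_one (α := ℤ)]
    exact Multiplicative.toAdd_lt.symm
  rw [h2]
  omega

lemma vP_eq_zero_of_not_mem {r : 𝓞 F} (hr : r ∉ q.asIdeal) : vP q (r : F) = 0 := by
  have hr0 : r ≠ 0 := fun h => hr (h ▸ q.asIdeal.zero_mem)
  have h1 := vP_nonneg q hr0
  have h2 := (vP_pos_iff q hr0).not.mpr hr
  omega

end Helpers

/-- Lemma 4.3 of the paper: semistability of the Frey curve
`y² = x³ − 5(a² + b²)x² + 5φ₅(a,b)x` away from `S_{K,10d}`, via `Δ` and `c₄`. -/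
theorem frey55p_semistable_outside_S
    (K : Type*) [Field K] [NumberField K] (hK : TotallyReal K)
    (p : ℕ) (hp : p.Prime) (hp5 : 5 ≤ p)
    (d : 𝓞 K) (hd0 : d ≠ 0)
    -- `d` is 5-th power free
    (hd5 : ∀ q : HeightOneSpectrum (𝓞 K), ¬ q.asIdeal ^ 5 ∣ Ideal.span {d})
    -- `(a, b, c)` is a nontrivial primitive solution of `a⁵ + b⁵ = d·c^p`
    (a b c : 𝓞 K)
    (heq : a ^ 5 + b ^ 5 = d * c ^ p)
    (hnt : a * b * c ≠ 0)
    (hprim : Ideal.span {a, b, c} = ⊤)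
    -- `Δ` and `c₄` of the Frey curve
    (Δ c₄ : 𝓞 K)
    (hΔ : Δ = 2 ^ 4 * 5 ^ 3 * (a + b) ^ 2 * (a ^ 5 + b ^ 5) ^ 2)
    (hc₄ : c₄ = 2 ^ 4 * 5 * (5 * (a ^ 2 + b ^ 2) ^ 2 -
      3 * (a ^ 4 - a ^ 3 * b + a ^ 2 * b ^ 2 - a * b ^ 3 + b ^ 4))) :
    ∀ q : HeightOneSpectrum (𝓞 K), 10 * d ∉ q.asIdeal →
      (p : ℤ) ∣ vP q (Δ : K) ∧ (0 < vP q (Δ : K) → vP q (c₄ : K) = 0) := by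
  intro q hq10
  set P := q.asIdeal with hPdef
  have hPprime : P.IsPrime := q.isPrime
  -- basic non-membership facts
  have h2 : (2 : 𝓞 K) ∉ P := fun h => hq10 (by
    have : (10 : 𝓞 K) * d = 2 * (5 * d) := by ring
    rw [this]; exact Ideal.mul_mem_right _ _ h)
  have h5 : (5 : 𝓞 K) ∉ P := fun h => hq10 (by
    have : (10 : 𝓞 K) * d = 5 * (2 * d) := by ring
    rw [this]; exact Ideal.mul_mem_right _ _ h)
  have hdP : d ∉ P := fun h => hq10 (Ideal.mul_mem_left _ _ h)
  -- nonzero facts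
  have ha0 : a ≠ 0 := fun h => hnt (by rw [h]; ring)
  have hb0 : b ≠ 0 := fun h => hnt (by rw [h]; ring)
  have hc0 : c ≠ 0 := fun h => hnt (by rw [h]; ring)
  have hdc : d * c ^ p ≠ 0 := mul_ne_zero hd0 (pow_ne_zero _ hc0)
  have hab0 : a + b ≠ 0 := by
    intro h
    have hb : b = -a := by linear_combination h
    rw [hb, show a ^ 5 + (-a) ^ 5 = 0 from by ring] at heq
    exact hdc heq.symm
  set φ : 𝓞 K := a ^ 4 - a ^ 3 * b + a ^ 2 * b ^ 2 - a * b ^ 3 + b ^ 4 with hφdef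
  have hfac : (a + b) * φ = d * c ^ p := by rw [← heq, hφdef]; ring
  have hφ0 : φ ≠ 0 := right_ne_zero_of_mul (hfac.symm ▸ hdc)
  -- key contradiction when a, b ∈ P
  have habc : a ∈ P → b ∈ P → False := by
    intro ha hb
    have hab5 : a ^ 5 + b ^ 5 ∈ P := by
      have h1 : a ^ 5 ∈ P := by
        rw [show a ^ 5 = a ^ 4 * a from by ring]
        exact Ideal.mul_mem_left _ _ ha
      have h2' : b ^ 5 ∈ P := by
        rw [show b ^ 5 = b ^ 4 * b from by ring]
        exact Ideal.mul_mem_left _ _ hb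
      exact Ideal.add_mem _ h1 h2'
    rw [heq] at hab5
    have hc : c ∈ P := by
      rcases hPprime.mem_or_mem hab5 with h | h
      · exact absurd h hdP
      · exact hPprime.mem_of_pow_mem _ h
    have hle : Ideal.span {a, b, c} ≤ P := by
      rw [Ideal.span_le]
      intro x hx
      simp only [Set.mem_insert_iff, Set.mem_singleton_iff] at hx
      rcases hx with rfl | rfl | rfl <;> assumption
    rw [hprim] at hle
    exact hPprime.ne_top (top_le_iff.mp hle)
  have hmemb : a ∈ P → (a + b) ∈ P → False := by
    intro ha hab
    exact habc ha (by
      rw [show b = (a + b) - a from by ring]; exact Ideal.sub_mem _ hab ha)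
  have hmem1 : (a + b) ∈ P → φ ∈ P → False := by
    intro hab hφ
    have h5a4 : (5 : 𝓞 K) * a ^ 4 ∈ P := by
      rw [show (5 : 𝓞 K) * a ^ 4 =
        φ - (a + b) * (b ^ 3 - 2 * a * b ^ 2 + 3 * a ^ 2 * b - 4 * a ^ 3) from by
          rw [hφdef]; ring]
      exact Ideal.sub_mem _ hφ (Ideal.mul_mem_right _ _ hab)
    rcases hPprime.mem_or_mem h5a4 with h | h
    · exact h5 h
    · exact hmemb (hPprime.mem_of_pow_mem _ h) hab
  -- valuation facts
  have v2 : vP q (((2 : 𝓞 K)) : K) = 0 := vP_eq_zero_of_not_mem q h2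
  have v5 : vP q (((5 : 𝓞 K)) : K) = 0 := vP_eq_zero_of_not_mem q h5
  have vd : vP q ((d : 𝓞 K) : K) = 0 := vP_eq_zero_of_not_mem q hdP
  have h2K : ((2 : 𝓞 K) : K) ≠ 0 := by
    exact_mod_cast (by norm_num : (2 : 𝓞 K) ≠ 0)
  have h5K : ((5 : 𝓞 K) : K) ≠ 0 := by
    exact_mod_cast (by norm_num : (5 : 𝓞 K) ≠ 0)
  have habK : (((a + b) : 𝓞 K) : K) ≠ 0 := by exact_mod_cast hab0
  have hdK : ((d : 𝓞 K) : K) ≠ 0 := by exact_mod_cast hd0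
  have hcK : ((c : 𝓞 K) : K) ≠ 0 := by exact_mod_cast hc0
  have hφK : ((φ : 𝓞 K) : K) ≠ 0 := by exact_mod_cast hφ0
  have hΔK : (Δ : K) = ((2 : 𝓞 K) : K) ^ 4 * ((5 : 𝓞 K) : K) ^ 3 *
      (((a + b) : 𝓞 K) : K) ^ 2 * (((d : 𝓞 K) : K) * ((c : 𝓞 K) : K) ^ p) ^ 2 := by
    have h : Δ = 2 ^ 4 * 5 ^ 3 * (a + b) ^ 2 * (d * c ^ p) ^ 2 := by rw [hΔ, heq]
    rw [h]; push_cast; ring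
  have E : vP q (Δ : K) = 4 * vP q ((2 : 𝓞 K) : K) + 3 * vP q ((5 : 𝓞 K) : K)
      + 2 * vP q (((a + b) : 𝓞 K) : K)
      + 2 * (vP q ((d : 𝓞 K) : K) + (p : ℤ) * vP q ((c : 𝓞 K) : K)) := by
    rw [hΔK,
      vP_mul q (mul_ne_zero (mul_ne_zero (pow_ne_zero _ h2K) (pow_ne_zero _ h5K))
        (pow_ne_zero _ habK)) (pow_ne_zero _ (mul_ne_zero hdK (pow_ne_zero _ hcK))),
      vP_mul q (mul_ne_zero (pow_ne_zero _ h2K) (pow_ne_zero _ h5K)) (pow_ne_zero _ habK),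
      vP_mul q (pow_ne_zero _ h2K) (pow_ne_zero _ h5K),
      vP_pow q h2K, vP_pow q h5K, vP_pow q habK,
      vP_pow q (mul_ne_zero hdK (pow_ne_zero _ hcK)),
      vP_mul q hdK (pow_ne_zero _ hcK), vP_pow q hcK]
    push_cast; ring
  constructor
  · -- p ∣ vP q Δ
    by_cases hab : (a + b) ∈ P
    · have hφnot : φ ∉ P := fun h => hmem1 hab h
      have vφ : vP q ((φ : 𝓞 K) : K) = 0 := vP_eq_zero_of_not_mem q hφnot
      have hfacK : (((a + b) : 𝓞 K) : K) * ((φ : 𝓞 K) : K)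
          = ((d : 𝓞 K) : K) * ((c : 𝓞 K) : K) ^ p := by
        exact_mod_cast congrArg (fun x : 𝓞 K => (x : K)) hfac
      have hvab : vP q (((a + b) : 𝓞 K) : K) = (p : ℤ) * vP q ((c : 𝓞 K) : K) := by
        have h1 : vP q (((a + b) : 𝓞 K) : K) + vP q ((φ : 𝓞 K) : K)
            = vP q ((d : 𝓞 K) : K) + (p : ℤ) * vP q ((c : 𝓞 K) : K) := by
          rw [← vP_mul q habK hφK, hfacK, vP_mul q hdK (pow_ne_zero _ hcK), vP_pow q hcK]
        omega
      rw [E, v2, v5, vd, hvab]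
      exact ⟨4 * vP q ((c : 𝓞 K) : K), by ring⟩
    · have vab : vP q (((a + b) : 𝓞 K) : K) = 0 := vP_eq_zero_of_not_mem q hab
      rw [E, v2, v5, vd, vab]
      exact ⟨2 * vP q ((c : 𝓞 K) : K), by ring⟩
  · -- vP q Δ > 0 → vP q c₄ = 0
    intro hpos
    have h2ne : (2 : 𝓞 K) ≠ 0 := fun h => h2 (h ▸ P.zero_mem)
    have h5ne : (5 : 𝓞 K) ≠ 0 := fun h => h5 (h ▸ P.zero_mem)
    have hΔ0 : Δ ≠ 0 := by
      rw [hΔ, heq]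
      exact mul_ne_zero (mul_ne_zero (mul_ne_zero (pow_ne_zero _ h2ne) (pow_ne_zero _ h5ne))
        (pow_ne_zero _ hab0)) (pow_ne_zero _ hdc)
    have hΔmem : Δ ∈ P := (vP_pos_iff q hΔ0).mp hpos
    have key : (a + b) ∈ P ∨ φ ∈ P := by
      have t := hΔmem
      rw [hΔ] at t
      rcases hPprime.mem_or_mem t with t | t
      · rcases hPprime.mem_or_mem t with t | t
        · rcases hPprime.mem_or_mem t with t | t
          · exact absurd (hPprime.mem_of_pow_mem _ t) h2
          · exact absurd (hPprime.mem_of_pow_mem _ t) h5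
        · exact Or.inl (hPprime.mem_of_pow_mem _ t)
      · have t2 := hPprime.mem_of_pow_mem _ t
        rw [show a ^ 5 + b ^ 5 = (a + b) * φ from by rw [hφdef]; ring] at t2
        exact hPprime.mem_or_mem t2
    have hc4not : c₄ ∉ P := by
      intro hc4mem
      rw [hc₄] at hc4mem
      have hE : (5 * (a ^ 2 + b ^ 2) ^ 2 - 3 * φ) ∈ P := by
        rcases hPprime.mem_or_mem hc4mem with t | t
        · rcases hPprime.mem_or_mem t with t | t
          · exact absurd (hPprime.mem_of_pow_mem _ t) h2
          · exact absurd t h5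
        · rw [hφdef]; exact t
      rcases key with hab | hφ
      · have h5a4 : (5 : 𝓞 K) * a ^ 4 ∈ P := by
          rw [show (5 : 𝓞 K) * a ^ 4 = (5 * (a ^ 2 + b ^ 2) ^ 2 - 3 * φ)
            - (a + b) * (2 * b ^ 3 + a * b ^ 2 + 6 * a ^ 2 * b - 3 * a ^ 3) from by
              rw [hφdef]; ring]
          exact Ideal.sub_mem _ hE (Ideal.mul_mem_right _ _ hab)
        rcases hPprime.mem_or_mem h5a4 with h | h
        · exact h5 h
        · exact hmemb (hPprime.mem_of_pow_mem _ h) hab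
      · have hsq : (a ^ 2 + b ^ 2) ∈ P := by
          have h1 : (5 : 𝓞 K) * (a ^ 2 + b ^ 2) ^ 2 ∈ P := by
            rw [show (5 : 𝓞 K) * (a ^ 2 + b ^ 2) ^ 2
              = (5 * (a ^ 2 + b ^ 2) ^ 2 - 3 * φ) + 3 * φ from by ring]
            exact Ideal.add_mem _ hE (Ideal.mul_mem_left _ _ hφ)
          rcases hPprime.mem_or_mem h1 with h | h
          · exact absurd h h5
          · exact hPprime.mem_of_pow_mem _ h
        have habmem : a * b ∈ P := by
          have h1 : (a * b) ^ 2 ∈ P := by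
            rw [show (a * b) ^ 2 = ((a ^ 2 + b ^ 2) - a * b) * (a ^ 2 + b ^ 2) - φ from by
              rw [hφdef]; ring]
            exact Ideal.sub_mem _ (Ideal.mul_mem_left _ _ hsq) hφ
          exact hPprime.mem_of_pow_mem _ h1
        rcases hPprime.mem_or_mem habmem with ha | hb
        · have hb : b ∈ P := by
            have : b ^ 2 ∈ P := by
              rw [show b ^ 2 = (a ^ 2 + b ^ 2) - a * a from by ring]
              exact Ideal.sub_mem _ hsq (Ideal.mul_mem_left _ _ ha)
            exact hPprime.mem_of_pow_mem _ this
          exact habc ha hb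
        · have ha : a ∈ P := by
            have : a ^ 2 ∈ P := by
              rw [show a ^ 2 = (a ^ 2 + b ^ 2) - b * b from by ring]
              exact Ideal.sub_mem _ hsq (Ideal.mul_mem_left _ _ hb)
            exact hPprime.mem_of_pow_mem _ this
          exact habc ha hb
    exact vP_eq_zero_of_not_mem q hc4not
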